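/- Let G be a graph. For all sets S₁ ⊆ S₂ ⊆ V(G), every T ⊆ V(G), and every ℓ ∈ ℕ, the probabilities of the forcing events satisfy P(A(S₁, T, ℓ)) ≤ P(A(S₂, T, ℓ)). -/

import Mathlib

open Finset Filter Real
open scoped Classical

namespace PZF

variable {V : Type*} [Fintype V] [DecidableEq V]

/-- The closed degree of `u` into the set `B`, i.e. `|N[u] ∩ B|`. -/
noncomputable def closedDegIn (G : SimpleGraph V) (B : Finset V) (u : V) : ℕ :=
  ((insert u (G.neighborSet u)) ∩ (B : Set V)).ncard

/-- The degree of `u` in `G`. -/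
noncomputable def deg (G : SimpleGraph V) (u : V) : ℕ :=
  (G.neighborSet u).ncard

/-- The probability that the blue vertex `u` forces its white neighbour `v` in one round of
probabilistic zero forcing, when the current blue set is `B`: it equals `|N[u] ∩ B| / deg u`
when `u` is blue, `v` is a white neighbour of `u`, and `0` otherwise. -/
noncomputable def edgeForceProb (G : SimpleGraph V) (B : Finset V) (u v : V) : ℝ :=
  if G.Adj u v ∧ u ∈ B ∧ v ∉ B then (closedDegIn G B u : ℝ) / (deg G u : ℝ) else 0

/-- Given per-ordered-pair forcing probabilities `q u v` (each attempt independent), the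
probability that one round starting from the blue set `B` produces exactly the blue set `B'`. -/
noncomputable def stepOfQ (q : V → V → ℝ) (B B' : Finset V) : ℝ :=
  if B ⊆ B' then
    (∏ v ∈ B' \ B, (1 - ∏ u ∈ B, (1 - q u v))) * ∏ v ∈ B'ᶜ, ∏ u ∈ B, (1 - q u v)
  else 0

/-- The transition rule of standard probabilistic zero forcing, as a function of the history
(the list of blue sets so far; only the current blue set matters). -/
noncomputable def stdStep (G : SimpleGraph V) (hist : List (Finset V)) (B' : Finset V) : ℝ :=
  stepOfQ (edgeForceProb G (hist.getLastD ∅)) (hist.getLastD ∅) B'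

/-- Probability of a given future trajectory, given the history so far. -/
noncomputable def seqProbAux (step : List (Finset V) → Finset V → ℝ) :
    List (Finset V) → List (Finset V) → ℝ
  | _, [] => 1
  | hist, B :: rest => step hist B * seqProbAux step (hist ++ [B]) rest

/-- The probability that, running the process given by the transition rule `step` from the
initial blue set `S` for `ℓ` rounds, the resulting trajectory (including the initial set)
satisfies the predicate `E`. -/
noncomputable def trajEventProb (step : List (Finset V) → Finset V → ℝ) (S : Finset V)
    (ℓ : ℕ) (E : List (Finset V) → Prop) : ℝ :=
  ∑ f : Fin ℓ → Finset V,
    if E (S :: List.ofFn f) then seqProbAux step [S] (List.ofFn f) else 0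

/-- `P(A(S,T,ℓ))`: the probability that, starting probabilistic zero forcing from the blue
set `S`, after `ℓ` rounds every vertex of `T` is blue. -/
noncomputable def probForced (G : SimpleGraph V) (S T : Finset V) (ℓ : ℕ) : ℝ :=
  trajEventProb (stdStep G) S ℓ fun traj => T ⊆ traj.getLastD ∅

/-- `P(pt_pzf(G,S) ≤ ℓ)`: the probability that all vertices are blue after `ℓ` rounds. -/
noncomputable def probAllBlue (G : SimpleGraph V) (S : Finset V) (ℓ : ℕ) : ℝ :=
  probForced G S Finset.univ ℓ

/-- The probability of a fixed graph `G` under the Erdős–Rényi measure `G(n,p)`. -/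
noncomputable def erProb (n : ℕ) (p : ℝ) (G : SimpleGraph (Fin n)) : ℝ :=
  p ^ G.edgeSet.ncard * (1 - p) ^ (n.choose 2 - G.edgeSet.ncard)

/-- The probability that `G(n,p)` satisfies the property `E`. -/
noncomputable def graphProb (n : ℕ) (p : ℝ) (E : SimpleGraph (Fin n) → Prop) : ℝ :=
  ∑ G : SimpleGraph (Fin n), if E G then erProb n p G else 0

/-- `P(pt_pzf(G(n,p), v) ≤ ℓ)`: the joint probability (over the random graph and the forcing
randomness) that probabilistic zero forcing started at `{v}` turns all of `G(n,p)` blue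
within `ℓ` rounds. -/
noncomputable def prPZFwithin (n : ℕ) (p : ℝ) (v : Fin n) (ℓ : ℕ) : ℝ :=
  ∑ G : SimpleGraph (Fin n), erProb n p G * probAllBlue G {v} ℓ

end PZF

namespace PZFAux
open PZF Finset

variable {V : Type*} [Fintype V] [DecidableEq V]

lemma edge_nonneg (G : SimpleGraph V) (B : Finset V) (u v : V) :
    0 ≤ edgeForceProb G B u v := by
  unfold edgeForceProb
  split
  · positivity
  · exact le_refl 0

lemma edge_le_one (G : SimpleGraph V) (B : Finset V) (u v : V) :
    edgeForceProb G B u v ≤ 1 := by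
  unfold edgeForceProb
  split
  case isTrue h =>
    obtain ⟨hadj, hu, hv⟩ := h
    have hvmem : v ∈ G.neighborSet u := hadj
    have hdegpos : 0 < deg G u := by
      unfold deg
      rw [Set.ncard_pos (Set.toFinite _)]
      exact ⟨v, hvmem⟩
    rw [div_le_one (by exact_mod_cast hdegpos)]
    have hle : closedDegIn G B u ≤ deg G u := by
      unfold closedDegIn
      have hsub : (insert u (G.neighborSet u)) ∩ (B : Set V)
          ⊆ (insert u (G.neighborSet u)) \ {v} := by
        rintro x ⟨hx1, hx2⟩
        refine ⟨hx1, ?_⟩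
        simp only [Set.mem_singleton_iff]
        rintro rfl
        exact hv hx2
      have h1 : ((insert u (G.neighborSet u)) \ {v} : Set V).ncard
          = (insert u (G.neighborSet u) : Set V).ncard - 1 :=
        Set.ncard_diff_singleton_of_mem (Set.mem_insert_of_mem _ hvmem)
      have h2 : (insert u (G.neighborSet u) : Set V).ncard = deg G u + 1 :=
        Set.ncard_insert_of_notMem (G.notMem_neighborSet_self) (Set.toFinite _)
      calc ((insert u (G.neighborSet u)) ∩ (B : Set V)).ncard
          ≤ ((insert u (G.neighborSet u)) \ {v} : Set V).ncard :=
            Set.ncard_le_ncard hsub (Set.toFinite _)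
        _ = deg G u := by rw [h1, h2]; omega
    exact_mod_cast hle
  case isFalse h => exact zero_le_one

lemma edge_mono {G : SimpleGraph V} {B₁ B₂ : Finset V} (h : B₁ ⊆ B₂) {u v : V}
    (hv : v ∉ B₂) : edgeForceProb G B₁ u v ≤ edgeForceProb G B₂ u v := by
  unfold edgeForceProb
  split
  case isTrue hc =>
    obtain ⟨hadj, hu, hv1⟩ := hc
    rw [if_pos ⟨hadj, h hu, hv⟩]
    have hcd : closedDegIn G B₁ u ≤ closedDegIn G B₂ u := by
      unfold closedDegIn
      exact Set.ncard_le_ncard (Set.inter_subset_inter_right _ (by exact_mod_cast h))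
        (Set.toFinite _)
    have hdeg : (0:ℝ) < (deg G u : ℝ) := by
      have : 0 < deg G u := by
        unfold deg
        rw [Set.ncard_pos (Set.toFinite _)]
        exact ⟨v, hadj⟩
      exact_mod_cast this
    have hcd' : (closedDegIn G B₁ u : ℝ) ≤ (closedDegIn G B₂ u : ℝ) := by exact_mod_cast hcd
    gcongr
  case isFalse hc =>
    exact edge_nonneg G B₂ u v

end PZFAux

namespace PZFAux
open PZF Finset

variable {V : Type*} [Fintype V] [DecidableEq V]

/-- Probability that a white vertex `v` gets forced in one round from blue set `B`. -/
noncomputable def pOf (G : SimpleGraph V) (B : Finset V) (v : V) : ℝ :=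
  1 - ∏ u ∈ B, (1 - edgeForceProb G B u v)

lemma pOf_nonneg (G : SimpleGraph V) (B : Finset V) (v : V) : 0 ≤ pOf G B v := by
  unfold pOf
  have : ∏ u ∈ B, (1 - edgeForceProb G B u v) ≤ 1 :=
    Finset.prod_le_one (fun u _ => by linarith [edge_le_one G B u v])
      (fun u _ => by linarith [edge_nonneg G B u v])
  linarith

lemma pOf_le_one (G : SimpleGraph V) (B : Finset V) (v : V) : pOf G B v ≤ 1 := by
  unfold pOf
  have : 0 ≤ ∏ u ∈ B, (1 - edgeForceProb G B u v) :=
    Finset.prod_nonneg (fun u _ => by linarith [edge_le_one G B u v])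
  linarith

lemma pOf_mono {G : SimpleGraph V} {B₁ B₂ : Finset V} (h : B₁ ⊆ B₂) {v : V}
    (hv : v ∉ B₂) : pOf G B₁ v ≤ pOf G B₂ v := by
  unfold pOf
  have key : ∏ u ∈ B₂, (1 - edgeForceProb G B₂ u v)
      ≤ ∏ u ∈ B₁, (1 - edgeForceProb G B₁ u v) := by
    have h1 : ∏ u ∈ B₂, (1 - edgeForceProb G B₂ u v)
        = (∏ u ∈ B₂ \ B₁, (1 - edgeForceProb G B₂ u v))
          * ∏ u ∈ B₁, (1 - edgeForceProb G B₂ u v) := (Finset.prod_sdiff h).symm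
    have h2 : ∏ u ∈ B₂ \ B₁, (1 - edgeForceProb G B₂ u v) ≤ 1 :=
      Finset.prod_le_one (fun u _ => by linarith [edge_le_one G B₂ u v])
        (fun u _ => by linarith [edge_nonneg G B₂ u v])
    have h3 : 0 ≤ ∏ u ∈ B₁, (1 - edgeForceProb G B₂ u v) :=
      Finset.prod_nonneg (fun u _ => by linarith [edge_le_one G B₂ u v])
    have h4 : ∏ u ∈ B₁, (1 - edgeForceProb G B₂ u v)
        ≤ ∏ u ∈ B₁, (1 - edgeForceProb G B₁ u v) :=
      Finset.prod_le_prod (fun u _ => by linarith [edge_le_one G B₂ u v])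
        (fun u _ => by linarith [edge_mono h hv (G := G) (u := u) (v := v)])
    calc ∏ u ∈ B₂, (1 - edgeForceProb G B₂ u v)
        = _ := h1
      _ ≤ ∏ u ∈ B₁, (1 - edgeForceProb G B₂ u v) := by nlinarith
      _ ≤ _ := h4
  linarith

/-- Expectation of `f` of the final blue set, when starting from base set `B` and each vertex
in the list is added independently with probability `p`. -/
noncomputable def Ev (p : V → ℝ) (f : Finset V → ℝ) : List V → Finset V → ℝ
  | [], B => f B
  | v :: l, B => p v * Ev p f l (insert v B) + (1 - p v) * Ev p f l B

lemma Ev_mono_base {p : V → ℝ} {f : Finset V → ℝ}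
    (hp : ∀ v, 0 ≤ p v ∧ p v ≤ 1) (hf : ∀ ⦃A B : Finset V⦄, A ⊆ B → f A ≤ f B) :
    ∀ (l : List V) {B₁ B₂ : Finset V}, B₁ ⊆ B₂ → Ev p f l B₁ ≤ Ev p f l B₂ := by
  intro l
  induction l with
  | nil => intro B₁ B₂ h; exact hf h
  | cons v l ih =>
    intro B₁ B₂ h
    simp only [Ev]
    have h1 := ih (Finset.insert_subset_insert v h)
    have h2 := ih h
    have := (hp v).1
    have := (hp v).2
    nlinarith

lemma Ev_mono_p {p₁ p₂ : V → ℝ} {f : Finset V → ℝ}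
    (hp₁ : ∀ v, 0 ≤ p₁ v ∧ p₁ v ≤ 1) (hp₂ : ∀ v, 0 ≤ p₂ v ∧ p₂ v ≤ 1)
    (hf : ∀ ⦃A B : Finset V⦄, A ⊆ B → f A ≤ f B) :
    ∀ (l : List V), (∀ v ∈ l, p₁ v ≤ p₂ v) →
      ∀ (B : Finset V), Ev p₁ f l B ≤ Ev p₂ f l B := by
  intro l
  induction l with
  | nil => intro _ B; exact le_refl _
  | cons v l ih =>
    intro h12 B
    simp only [Ev]
    have hX := ih (fun u hu => h12 u (List.mem_cons_of_mem v hu)) (insert v B)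
    have hY := ih (fun u hu => h12 u (List.mem_cons_of_mem v hu)) B
    have hYX : Ev p₂ f l B ≤ Ev p₂ f l (insert v B) :=
      Ev_mono_base hp₂ hf l (Finset.subset_insert v B)
    have hv := h12 v List.mem_cons_self
    have := (hp₁ v).1
    have := (hp₁ v).2
    have := (hp₂ v).2
    nlinarith

lemma Ev_absorb {p : V → ℝ} {f : Finset V → ℝ}
    (hp : ∀ v, 0 ≤ p v ∧ p v ≤ 1) (hf : ∀ ⦃A B : Finset V⦄, A ⊆ B → f A ≤ f B)
    (v : V) (l : List V) (B : Finset V) :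
    Ev p f (v :: l) B ≤ Ev p f l (insert v B) := by
  simp only [Ev]
  have h := Ev_mono_base hp hf l (Finset.subset_insert v B)
  have := (hp v).1
  have := (hp v).2
  nlinarith

lemma Ev_append {p : V → ℝ} {f : Finset V → ℝ}
    (hp : ∀ v, 0 ≤ p v ∧ p v ≤ 1) (hf : ∀ ⦃A B : Finset V⦄, A ⊆ B → f A ≤ f B) :
    ∀ (d l : List V) (B : Finset V), Ev p f (d ++ l) B ≤ Ev p f l (B ∪ d.toFinset) := by
  intro d
  induction d with
  | nil => intro l B; simp
  | cons v d ih =>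
    intro l B
    have h1 : Ev p f ((v :: d) ++ l) B ≤ Ev p f (d ++ l) (insert v B) :=
      Ev_absorb hp hf v (d ++ l) B
    have h2 := ih l (insert v B)
    have h3 : insert v B ∪ d.toFinset = B ∪ (v :: d).toFinset := by
      simp [Finset.insert_union, Finset.union_insert]
    calc Ev p f ((v :: d) ++ l) B ≤ _ := h1
      _ ≤ Ev p f l (insert v B ∪ d.toFinset) := h2
      _ = _ := by rw [h3]

lemma Ev_eq_sum {p : V → ℝ} {f : Finset V → ℝ} :
    ∀ (l : List V), l.Nodup → ∀ (B₀ : Finset V),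
      Ev p f l B₀ = ∑ A ∈ l.toFinset.powerset,
        (∏ v ∈ A, p v) * ((∏ v ∈ l.toFinset \ A, (1 - p v)) * f (B₀ ∪ A)) := by
  intro l
  induction l with
  | nil => intro _ B₀; simp [Ev]
  | cons v l ih =>
    intro hnd B₀
    have hv : v ∉ l.toFinset := by
      simp only [List.mem_toFinset]
      exact (List.nodup_cons.mp hnd).1
    have hndl : l.Nodup := (List.nodup_cons.mp hnd).2
    rw [List.toFinset_cons]
    rw [Finset.sum_powerset_insert hv]
    simp only [Ev]
    rw [ih hndl (insert v B₀), ih hndl B₀]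
    have e1 : (1 - p v) * ∑ A ∈ l.toFinset.powerset,
          (∏ u ∈ A, p u) * ((∏ u ∈ l.toFinset \ A, (1 - p u)) * f (B₀ ∪ A))
        = ∑ A ∈ l.toFinset.powerset,
          (∏ u ∈ A, p u) * ((∏ u ∈ insert v l.toFinset \ A, (1 - p u)) * f (B₀ ∪ A)) := by
      rw [Finset.mul_sum]
      refine Finset.sum_congr rfl ?_
      intro A hA
      rw [Finset.mem_powerset] at hA
      have hvA : v ∉ A := fun h => hv (hA h)
      have hins : insert v l.toFinset \ A = insert v (l.toFinset \ A) := by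
        rw [Finset.insert_sdiff_of_notMem _ hvA]
      have hvdiff : v ∉ l.toFinset \ A := fun h => hv (Finset.mem_sdiff.mp h).1
      rw [hins, Finset.prod_insert hvdiff]
      ring
    have e2 : p v * ∑ A ∈ l.toFinset.powerset,
          (∏ u ∈ A, p u) * ((∏ u ∈ l.toFinset \ A, (1 - p u)) * f (insert v B₀ ∪ A))
        = ∑ A ∈ l.toFinset.powerset,
          (∏ u ∈ insert v A, p u) *
            ((∏ u ∈ insert v l.toFinset \ insert v A, (1 - p u)) * f (B₀ ∪ insert v A)) := by
      rw [Finset.mul_sum]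
      refine Finset.sum_congr rfl ?_
      intro A hA
      rw [Finset.mem_powerset] at hA
      have hvA : v ∉ A := fun h => hv (hA h)
      have hdiff : insert v l.toFinset \ insert v A = l.toFinset \ A := by
        ext x
        simp only [Finset.mem_sdiff, Finset.mem_insert, not_or]
        constructor
        · rintro ⟨hx1 | hx1, hx2, hx3⟩
          · exact absurd hx1 hx2
          · exact ⟨hx1, hx3⟩
        · rintro ⟨hx1, hx2⟩
          exact ⟨Or.inr hx1, fun h => hv (h ▸ hx1), hx2⟩
      rw [hdiff, Finset.prod_insert hvA]
      have : B₀ ∪ insert v A = insert v B₀ ∪ A := by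
        rw [Finset.union_insert, Finset.insert_union]
      rw [this]
      ring
    rw [← e1, ← e2]
    ring

end PZFAux

namespace PZFAux
open PZF Finset

variable {V : Type*} [Fintype V] [DecidableEq V]

noncomputable def Phi (p : V → ℝ) (f : Finset V → ℝ) (B : Finset V) : ℝ :=
  ∑ A ∈ Bᶜ.powerset, (∏ v ∈ A, p v) * ((∏ v ∈ Bᶜ \ A, (1 - p v)) * f (B ∪ A))

lemma Ev_of_list {p : V → ℝ} {f : Finset V → ℝ} {l : List V} {B : Finset V}
    (hnd : l.Nodup) (htf : l.toFinset = Bᶜ) : Phi p f B = Ev p f l B := by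
  rw [Ev_eq_sum l hnd B, htf]
  rfl

lemma Phi_mono_base {p : V → ℝ} {f : Finset V → ℝ}
    (hp : ∀ v, 0 ≤ p v ∧ p v ≤ 1) (hf : ∀ ⦃A B : Finset V⦄, A ⊆ B → f A ≤ f B)
    {B₁ B₂ : Finset V} (h : B₁ ⊆ B₂) : Phi p f B₁ ≤ Phi p f B₂ := by
  set d := (B₂ \ B₁).toList with hd
  set l := B₂ᶜ.toList with hl
  have hnd : (d ++ l).Nodup := by
    refine List.Nodup.append (Finset.nodup_toList _) (Finset.nodup_toList _) ?_
    intro x hx1 hx2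
    rw [hd, Finset.mem_toList, Finset.mem_sdiff] at hx1
    rw [hl, Finset.mem_toList, Finset.mem_compl] at hx2
    exact hx2 hx1.1
  have htf : (d ++ l).toFinset = B₁ᶜ := by
    rw [List.toFinset_append, hd, hl, Finset.toList_toFinset, Finset.toList_toFinset]
    ext x
    simp only [Finset.mem_union, Finset.mem_sdiff, Finset.mem_compl]
    constructor
    · rintro (⟨_, hx⟩ | hx)
      · exact hx
      · exact fun hc => hx (h hc)
    · intro hx
      by_cases hx2 : x ∈ B₂
      · exact Or.inl ⟨hx2, hx⟩
      · exact Or.inr hx2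
  rw [Ev_of_list hnd htf, Ev_of_list (Finset.nodup_toList _) (by rw [Finset.toList_toFinset])]
  have h1 := Ev_append hp hf d B₂ᶜ.toList B₁
  have h2 : B₁ ∪ d.toFinset = B₂ := by
    rw [hd, Finset.toList_toFinset]
    exact Finset.union_sdiff_of_subset h
  rw [h2] at h1
  exact h1

lemma Phi_mono_p {p₁ p₂ : V → ℝ} {f : Finset V → ℝ}
    (hp₁ : ∀ v, 0 ≤ p₁ v ∧ p₁ v ≤ 1) (hp₂ : ∀ v, 0 ≤ p₂ v ∧ p₂ v ≤ 1)
    (hf : ∀ ⦃A B : Finset V⦄, A ⊆ B → f A ≤ f B)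
    {B : Finset V} (h12 : ∀ v ∉ B, p₁ v ≤ p₂ v) : Phi p₁ f B ≤ Phi p₂ f B := by
  rw [Ev_of_list (Finset.nodup_toList _) (Finset.toList_toFinset Bᶜ),
    Ev_of_list (Finset.nodup_toList _) (Finset.toList_toFinset Bᶜ)]
  refine Ev_mono_p hp₁ hp₂ hf _ ?_ B
  intro v hv
  rw [Finset.mem_toList, Finset.mem_compl] at hv
  exact h12 v hv

lemma sum_step (G : SimpleGraph V) (B : Finset V) (f : Finset V → ℝ) :
    ∑ B' : Finset V, stepOfQ (edgeForceProb G B) B B' * f B' = Phi (pOf G B) f B := by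
  unfold stepOfQ Phi
  have h1 : ∀ B' : Finset V,
      (if B ⊆ B' then
        (∏ v ∈ B' \ B, (1 - ∏ u ∈ B, (1 - edgeForceProb G B u v))) *
          ∏ v ∈ B'ᶜ, ∏ u ∈ B, (1 - edgeForceProb G B u v) else 0) * f B'
      = if B ⊆ B' then
        ((∏ v ∈ B' \ B, (1 - ∏ u ∈ B, (1 - edgeForceProb G B u v))) *
          ∏ v ∈ B'ᶜ, ∏ u ∈ B, (1 - edgeForceProb G B u v)) * f B' else 0 := by
    intro B'; split <;> simp
  rw [Finset.sum_congr rfl (fun B' _ => h1 B'), ← Finset.sum_filter]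
  refine (Finset.sum_nbij' (fun B' => B' \ B) (fun A => B ∪ A) ?_ ?_ ?_ ?_ ?_).symm.symm
  · intro B' hB'
    rw [Finset.mem_filter] at hB'
    rw [Finset.mem_powerset]
    intro x hx
    rw [Finset.mem_sdiff] at hx
    exact Finset.mem_compl.mpr hx.2
  · intro A hA
    rw [Finset.mem_powerset] at hA
    rw [Finset.mem_filter]
    exact ⟨Finset.mem_univ _, Finset.subset_union_left⟩
  · intro B' hB'
    rw [Finset.mem_filter] at hB'
    exact Finset.union_sdiff_of_subset hB'.2
  · intro A hA
    rw [Finset.mem_powerset] at hA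
    refine Finset.union_sdiff_cancel_left ?_
    rw [Finset.disjoint_left]
    intro x hxB hxA
    exact Finset.mem_compl.mp (hA hxA) hxB
  · intro B' hB'
    rw [Finset.mem_filter] at hB'
    have hc : (B ∪ B' \ B) = B' := Finset.union_sdiff_of_subset hB'.2
    have hc2 : Bᶜ \ (B' \ B) = B'ᶜ := by
      ext x
      simp only [Finset.mem_sdiff, Finset.mem_compl, not_and, not_not]
      constructor
      · rintro ⟨hx1, hx2⟩
        intro hxB'
        exact hx1 (hx2 hxB')
      · intro hx
        have hxB : x ∉ B := fun h => hx (hB'.2 h)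
        exact ⟨hxB, fun h => absurd h hx⟩
    have hp : ∀ v, 1 - pOf G B v = ∏ u ∈ B, (1 - edgeForceProb G B u v) := by
      intro v; unfold pOf; ring
    rw [hc, hc2]
    simp only [hp]
    unfold pOf
    ring

noncomputable def run (G : SimpleGraph V) : Finset V → List (Finset V) → ℝ
  | _, [] => 1
  | B, B' :: rest => stepOfQ (edgeForceProb G B) B B' * run G B' rest

lemma seqProbAux_eq (G : SimpleGraph V) :
    ∀ (l hist : List (Finset V)),
      seqProbAux (stdStep G) hist l = run G (hist.getLastD ∅) l := by
  intro l
  induction l with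
  | nil => intro hist; simp [seqProbAux, run]
  | cons B rest ih =>
    intro hist
    simp only [seqProbAux, run, stdStep]
    rw [ih (hist ++ [B]), List.getLastD_concat]

lemma probForced_zero (G : SimpleGraph V) (S T : Finset V) :
    probForced G S T 0 = if T ⊆ S then 1 else 0 := by
  unfold probForced trajEventProb
  rw [Fintype.sum_unique]
  simp [seqProbAux, List.getLastD_cons]

lemma probForced_succ (G : SimpleGraph V) (S T : Finset V) (ℓ : ℕ) :
    probForced G S T (ℓ + 1)
      = ∑ B : Finset V, stepOfQ (edgeForceProb G S) S B * probForced G B T ℓ := by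
  unfold probForced trajEventProb
  rw [← Equiv.sum_comp (Fin.consEquiv (fun _ : Fin (ℓ+1) => Finset V))]
  rw [Fintype.sum_prod_type]
  refine Finset.sum_congr rfl ?_
  intro B _
  rw [Finset.mul_sum]
  refine Finset.sum_congr rfl ?_
  intro g _
  have hofn : List.ofFn ((Fin.consEquiv (fun _ : Fin (ℓ+1) => Finset V)) (B, g))
      = B :: List.ofFn g := by
    rw [List.ofFn_succ]
    simp [Fin.consEquiv]
  rw [hofn]
  simp only [List.getLastD_cons]
  have hseq : seqProbAux (stdStep G) [S] (B :: List.ofFn g)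
      = stepOfQ (edgeForceProb G S) S B * seqProbAux (stdStep G) [B] (List.ofFn g) := by
    simp only [seqProbAux]
    rw [seqProbAux_eq G _ ([S] ++ [B]), seqProbAux_eq G _ [B]]
    simp [stdStep]
  rw [hseq, mul_ite, mul_zero]

end PZFAux


/-- **monotone coupling.**  For every graph `G`, all sets `S₁ ⊆ S₂ ⊆ V(G)`,
every `T ⊆ V(G)` and every `ℓ ∈ ℕ`, `P(A(S₁, T, ℓ)) ≤ P(A(S₂, T, ℓ))`, where `A(S, T, ℓ)` is
the event that starting probabilistic zero forcing with blue set `S`, after `ℓ` rounds every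
vertex of `T` is blue. -/
theorem probForced_mono {V : Type*} [Fintype V] [DecidableEq V] (G : SimpleGraph V)
    (S₁ S₂ T : Finset V) (hS : S₁ ⊆ S₂) (ℓ : ℕ) :
    PZF.probForced G S₁ T ℓ ≤ PZF.probForced G S₂ T ℓ := by
  induction ℓ generalizing S₁ S₂ with
  | zero =>
    rw [PZFAux.probForced_zero, PZFAux.probForced_zero]
    split_ifs with h1 h2
    · exact le_refl 1
    · exact absurd (h1.trans hS) h2
    · exact zero_le_one
    · exact le_refl 0
  | succ ℓ ih =>
    rw [PZFAux.probForced_succ, PZFAux.probForced_succ,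
      PZFAux.sum_step G S₁ (fun B => PZF.probForced G B T ℓ),
      PZFAux.sum_step G S₂ (fun B => PZF.probForced G B T ℓ)]
    have hf : ∀ ⦃A B : Finset V⦄, A ⊆ B →
        PZF.probForced G A T ℓ ≤ PZF.probForced G B T ℓ := fun A B h => ih A B h
    have hp1 : ∀ v, 0 ≤ PZFAux.pOf G S₁ v ∧ PZFAux.pOf G S₁ v ≤ 1 :=
      fun v => ⟨PZFAux.pOf_nonneg G S₁ v, PZFAux.pOf_le_one G S₁ v⟩
    have hp2 : ∀ v, 0 ≤ PZFAux.pOf G S₂ v ∧ PZFAux.pOf G S₂ v ≤ 1 :=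
      fun v => ⟨PZFAux.pOf_nonneg G S₂ v, PZFAux.pOf_le_one G S₂ v⟩
    calc PZFAux.Phi (PZFAux.pOf G S₁) (fun B => PZF.probForced G B T ℓ) S₁
        ≤ PZFAux.Phi (PZFAux.pOf G S₁) (fun B => PZF.probForced G B T ℓ) S₂ :=
          PZFAux.Phi_mono_base hp1 hf hS
      _ ≤ PZFAux.Phi (PZFAux.pOf G S₂) (fun B => PZF.probForced G B T ℓ) S₂ :=
          PZFAux.Phi_mono_p hp1 hp2 hf (fun v hv => PZFAux.pOf_mono hS hv)
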